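/- arXiv:1905.10590 — 2 statements merged into one kernel-verified Lean document; each statement's English description precedes it below -/
import Mathlib

section
/- For t < u, the random variables C_t and C_u on the uniform space {H,T}^m are uncorrelated: E[C_t C_u] = E[C_t]·E[C_u]. -/
open Finset

/-- Number of heads among the first `t` flips of `ω ∈ {H,T}^m` (heads = `true`). -/
def X (m t : ℕ) (ω : Fin m → Bool) : ℕ :=
  (Finset.univ.filter (fun i : Fin m => (i : ℕ) < t ∧ ω i = true)).card

/-- `C t = X (t-1)` if flip `t` (1-indexed) is tails, and `0` otherwise. -/
def C (m t : ℕ) (ω : Fin m → Bool) : ℕ :=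
  if h : t - 1 < m then (if ω ⟨t - 1, h⟩ = false then X m (t - 1) ω else 0) else 0

/-- Number of tails. -/
def Y (m : ℕ) (ω : Fin m → Bool) : ℕ := m - X m m ω

/-- Size of the random partition: `N = Y + ∑_{t=1}^m C_t`. -/
def N (m : ℕ) (ω : Fin m → Bool) : ℕ := Y m ω + ∑ t ∈ Finset.Icc 1 m, C m t ω

/-- Expectation with respect to the uniform distribution on `{H,T}^m`. -/
noncomputable def expec (m : ℕ) (f : (Fin m → Bool) → ℝ) : ℝ :=
  (∑ ω : Fin m → Bool, f ω) / 2 ^ m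

/-- Variance with respect to the uniform distribution on `{H,T}^m`. -/
noncomputable def variance (m : ℕ) (f : (Fin m → Bool) → ℝ) : ℝ :=
  expec m (fun ω => (f ω - expec m f) ^ 2)

lemma sum_prod_ind (m : ℕ) (s : Finset (Fin m)) (β : Fin m → Bool) :
    ∑ ω : Fin m → Bool, ∏ i ∈ s, (if ω i = β i then (1:ℝ) else 0) = 2 ^ m / 2 ^ s.card := by
  have key : ∀ ω : Fin m → Bool, ∏ i ∈ s, (if ω i = β i then (1:ℝ) else 0)
      = ∏ i : Fin m, (if i ∈ s then (if ω i = β i then (1:ℝ) else 0) else 1) := by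
    intro ω
    rw [Finset.prod_ite_mem univ s, Finset.univ_inter]
  simp only [key]
  have h2 : ∑ ω : Fin m → Bool, ∏ i : Fin m, (if i ∈ s then (if ω i = β i then (1:ℝ) else 0) else 1)
      = ∏ i : Fin m, ∑ b : Bool, (if i ∈ s then (if b = β i then (1:ℝ) else 0) else 1) := by
    rw [Finset.prod_univ_sum]
    rw [← Fintype.piFinset_univ]
  rw [h2]
  have h3 : ∀ i : Fin m, (∑ b : Bool, (if i ∈ s then (if b = β i then (1:ℝ) else 0) else 1))
      = if i ∈ s then 1 else 2 := by
    intro i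
    by_cases hi : i ∈ s <;> simp [hi, Fintype.sum_bool]
  simp only [h3]
  rw [Finset.prod_ite, Finset.prod_const, Finset.prod_const, one_pow, one_mul]
  have hcard : (univ.filter (fun i => i ∈ s)).card = s.card := by
    simp [Finset.filter_mem_eq_inter]
  have hcard2 : (univ.filter (fun i => ¬ i ∈ s)).card = m - s.card := by
    have := Finset.card_filter_add_card_filter_not (s := (univ : Finset (Fin m))) (p := fun i => i ∈ s)
    simp [hcard] at this ⊢
    omega
  rw [hcard2, pow_sub₀ (2:ℝ) (by norm_num) (by simpa using Finset.card_le_univ s)]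
  ring

lemma count2 (m : ℕ) (a b : Fin m) (hab : a ≠ b) (x y : Bool) :
    ∑ ω : Fin m → Bool, (if ω a = x then (1:ℝ) else 0) * (if ω b = y then 1 else 0)
      = 2 ^ m / 4 := by
  have h := sum_prod_ind m {a, b} (fun j => if j = a then x else y)
  rw [Finset.card_insert_of_notMem (by simp [hab]), Finset.card_singleton] at h
  calc ∑ ω : Fin m → Bool, (if ω a = x then (1:ℝ) else 0) * (if ω b = y then 1 else 0)
      = ∑ ω : Fin m → Bool, ∏ i ∈ ({a, b} : Finset (Fin m)),
          (if ω i = (if i = a then x else y) then (1:ℝ) else 0) := by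
        refine Finset.sum_congr rfl fun ω _ => ?_
        rw [Finset.prod_insert (by simp [hab]), Finset.prod_singleton]
        simp [hab, Ne.symm hab]
    _ = 2 ^ m / 4 := by rw [h]; norm_num

lemma count3 (m : ℕ) (a b c : Fin m) (hab : a ≠ b) (hac : a ≠ c) (hbc : b ≠ c)
    (x y z : Bool) :
    ∑ ω : Fin m → Bool, (if ω a = x then (1:ℝ) else 0) * (if ω b = y then 1 else 0)
        * (if ω c = z then 1 else 0) = 2 ^ m / 8 := by
  have h := sum_prod_ind m {a, b, c} (fun j => if j = a then x else if j = b then y else z)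
  rw [Finset.card_insert_of_notMem (by simp [hab, hac]),
    Finset.card_insert_of_notMem (by simp [hbc]), Finset.card_singleton] at h
  calc ∑ ω : Fin m → Bool, (if ω a = x then (1:ℝ) else 0) * (if ω b = y then 1 else 0)
        * (if ω c = z then 1 else 0)
      = ∑ ω : Fin m → Bool, ∏ i ∈ ({a, b, c} : Finset (Fin m)),
          (if ω i = (if i = a then x else if i = b then y else z) then (1:ℝ) else 0) := by
        refine Finset.sum_congr rfl fun ω _ => ?_
        rw [Finset.prod_insert (by simp [hab, hac]), Finset.prod_insert (by simp [hbc]),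
          Finset.prod_singleton]
        simp [hab, hac, hbc, Ne.symm hab, Ne.symm hac, Ne.symm hbc, mul_assoc]
    _ = 2 ^ m / 8 := by rw [h]; norm_num

lemma count4 (m : ℕ) (a b c d : Fin m) (hab : a ≠ b) (hac : a ≠ c) (had : a ≠ d)
    (hbc : b ≠ c) (hbd : b ≠ d) (hcd : c ≠ d) (x y z w : Bool) :
    ∑ ω : Fin m → Bool, (if ω a = x then (1:ℝ) else 0) * (if ω b = y then 1 else 0)
        * (if ω c = z then 1 else 0) * (if ω d = w then 1 else 0) = 2 ^ m / 16 := by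
  have h := sum_prod_ind m {a, b, c, d}
    (fun j => if j = a then x else if j = b then y else if j = c then z else w)
  rw [Finset.card_insert_of_notMem (by simp [hab, hac, had]),
    Finset.card_insert_of_notMem (by simp [hbc, hbd]),
    Finset.card_insert_of_notMem (by simp [hcd]), Finset.card_singleton] at h
  calc ∑ ω : Fin m → Bool, (if ω a = x then (1:ℝ) else 0) * (if ω b = y then 1 else 0)
        * (if ω c = z then 1 else 0) * (if ω d = w then 1 else 0)
      = ∑ ω : Fin m → Bool, ∏ i ∈ ({a, b, c, d} : Finset (Fin m)),
          (if ω i = (if i = a then x else if i = b then y else if i = c then z else w)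
            then (1:ℝ) else 0) := by
        refine Finset.sum_congr rfl fun ω _ => ?_
        rw [Finset.prod_insert (by simp [hab, hac, had]),
          Finset.prod_insert (by simp [hbc, hbd]),
          Finset.prod_insert (by simp [hcd]), Finset.prod_singleton]
        simp [hab, hac, had, hbc, hbd, hcd, Ne.symm hab, Ne.symm hac, Ne.symm had,
          Ne.symm hbc, Ne.symm hbd, Ne.symm hcd, mul_assoc]
    _ = 2 ^ m / 16 := by rw [h]; norm_num

lemma card_filter_lt (m c : ℕ) (h : c ≤ m) :
    (univ.filter (fun i : Fin m => (i:ℕ) < c)).card = c := by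
  have : (univ.filter (fun i : Fin m => (i:ℕ) < c)) =
      (univ : Finset (Fin c)).map ⟨Fin.castLE h, Fin.castLE_injective h⟩ := by
    ext i
    simp only [Finset.mem_filter, Finset.mem_univ, true_and, Finset.mem_map,
      Function.Embedding.coeFn_mk, exists_true_left]
    constructor
    · intro hi
      exact ⟨⟨i, hi⟩, by ext; simp⟩
    · rintro ⟨j, rfl⟩; exact j.isLt
  rw [this, Finset.card_map, Finset.card_univ, Fintype.card_fin]

lemma C_cast (m t : ℕ) (hm : t - 1 < m) (ω : Fin m → Bool) :
    (C m t ω : ℝ) = (∑ i : Fin m, (if ((i:ℕ) < t - 1 ∧ ω i = true) then (1:ℝ) else 0))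
      * (if ω ⟨t-1, hm⟩ = false then (1:ℝ) else 0) := by
  rw [C, dif_pos hm, X, Finset.card_filter]
  split_ifs with hk
  · push_cast
    ring
  · simp

lemma sum_C_eq (m t : ℕ) (h1 : 1 ≤ t) (h2 : t ≤ m) :
    ∑ ω : Fin m → Bool, (C m t ω : ℝ) = ((t-1 : ℕ) : ℝ) * (2^m/4) := by
  have hm : t - 1 < m := by omega
  calc ∑ ω : Fin m → Bool, (C m t ω : ℝ)
      = ∑ ω : Fin m → Bool, ∑ i : Fin m,
          (if (i:ℕ) < t - 1 then
            (if ω i = true then (1:ℝ) else 0) * (if ω ⟨t-1, hm⟩ = false then 1 else 0)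
          else 0) := by
        refine Finset.sum_congr rfl fun ω _ => ?_
        rw [C_cast m t hm ω, Finset.sum_mul]
        refine Finset.sum_congr rfl fun i _ => ?_
        by_cases hi : (i:ℕ) < t - 1 <;> by_cases hw : ω i = true <;> simp [hi, hw]
    _ = ∑ i : Fin m, ∑ ω : Fin m → Bool,
          (if (i:ℕ) < t - 1 then
            (if ω i = true then (1:ℝ) else 0) * (if ω ⟨t-1, hm⟩ = false then 1 else 0)
          else 0) := Finset.sum_comm
    _ = ∑ i : Fin m, (if (i:ℕ) < t - 1 then (2:ℝ)^m/4 else 0) := by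
        refine Finset.sum_congr rfl fun i _ => ?_
        by_cases hi : (i:ℕ) < t - 1
        · simp only [hi, if_true]
          exact count2 m i ⟨t-1, hm⟩ (by intro h; apply absurd hi; simp [h]) true false
        · simp [hi]
    _ = ((t-1 : ℕ) : ℝ) * (2^m/4) := by
        rw [← Finset.sum_filter, Finset.sum_const, card_filter_lt m (t-1) (by omega),
          nsmul_eq_mul]

lemma sum_CC_eq (m t u : ℕ) (h1 : 1 ≤ t) (htu : t < u) (h2 : u ≤ m) :
    ∑ ω : Fin m → Bool, (C m t ω : ℝ) * (C m u ω : ℝ)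
      = ((t-1 : ℕ) : ℝ) * ((u-1 : ℕ) : ℝ) * (2^m/16) := by
  have hmt : t - 1 < m := by omega
  have hmu : u - 1 < m := by omega
  set kt : Fin m := ⟨t-1, hmt⟩ with hkt
  set ku : Fin m := ⟨u-1, hmu⟩ with hku
  have hktu : kt ≠ ku := by
    intro h
    have := congrArg Fin.val h
    simp [hkt, hku] at this
    omega
  calc ∑ ω : Fin m → Bool, (C m t ω : ℝ) * (C m u ω : ℝ)
      = ∑ ω : Fin m → Bool, ∑ i : Fin m, ∑ j : Fin m,
          (if (i:ℕ) < t - 1 then (if (j:ℕ) < u - 1 then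
            (if ω i = true then (1:ℝ) else 0) * (if ω j = true then 1 else 0)
              * (if ω kt = false then 1 else 0) * (if ω ku = false then 1 else 0)
          else 0) else 0) := by
        refine Finset.sum_congr rfl fun ω _ => ?_
        rw [C_cast m t hmt ω, C_cast m u hmu ω]
        have hms := Finset.sum_mul_sum (univ : Finset (Fin m)) (univ : Finset (Fin m))
          (fun i => (if ((i:ℕ) < t - 1 ∧ ω i = true) then (1:ℝ) else 0))
          (fun j => (if ((j:ℕ) < u - 1 ∧ ω j = true) then (1:ℝ) else 0))
        rw [mul_mul_mul_comm, hms, Finset.sum_mul]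
        refine Finset.sum_congr rfl fun i _ => ?_
        rw [Finset.sum_mul]
        refine Finset.sum_congr rfl fun j _ => ?_
        by_cases hi : (i:ℕ) < t - 1 <;> by_cases hj : (j:ℕ) < u - 1 <;>
          by_cases hwi : ω i = true <;> by_cases hwj : ω j = true <;>
          simp [hi, hj, hwi, hwj, hkt, hku]
    _ = ∑ i : Fin m, ∑ j : Fin m, ∑ ω : Fin m → Bool,
          (if (i:ℕ) < t - 1 then (if (j:ℕ) < u - 1 then
            (if ω i = true then (1:ℝ) else 0) * (if ω j = true then 1 else 0)
              * (if ω kt = false then 1 else 0) * (if ω ku = false then 1 else 0)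
          else 0) else 0) := by
        rw [show (∑ ω : Fin m → Bool, ∑ i : Fin m, ∑ j : Fin m,
          (if (i:ℕ) < t - 1 then (if (j:ℕ) < u - 1 then
            (if ω i = true then (1:ℝ) else 0) * (if ω j = true then 1 else 0)
              * (if ω kt = false then 1 else 0) * (if ω ku = false then 1 else 0)
          else 0) else 0)) = ∑ i : Fin m, ∑ ω : Fin m → Bool, ∑ j : Fin m,
          (if (i:ℕ) < t - 1 then (if (j:ℕ) < u - 1 then
            (if ω i = true then (1:ℝ) else 0) * (if ω j = true then 1 else 0)
              * (if ω kt = false then 1 else 0) * (if ω ku = false then 1 else 0)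
          else 0) else 0) from Finset.sum_comm]
        exact Finset.sum_congr rfl fun i _ => Finset.sum_comm
    _ = ∑ i : Fin m, (if (i:ℕ) < t - 1 then
          (∑ j : Fin m, (if (j:ℕ) < u - 1 then
            (∑ ω : Fin m → Bool,
              (if ω i = true then (1:ℝ) else 0) * (if ω j = true then 1 else 0)
                * (if ω kt = false then 1 else 0) * (if ω ku = false then 1 else 0))
          else 0)) else 0) := by
        refine Finset.sum_congr rfl fun i _ => ?_
        by_cases hi : (i:ℕ) < t - 1
        · simp only [hi, if_true]
          refine Finset.sum_congr rfl fun j _ => ?_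
          by_cases hj : (j:ℕ) < u - 1
          · simp only [hj, if_true]
          · simp [hj]
        · simp [hi]
    _ = ∑ i : Fin m, (if (i:ℕ) < t - 1 then ((u-1 : ℕ) : ℝ) * (2^m/16) else 0) := by
        refine Finset.sum_congr rfl fun i _ => ?_
        by_cases hi : (i:ℕ) < t - 1
        · simp only [hi, if_true]
          have hikt : i ≠ kt := by intro h; apply absurd hi; simp [h, hkt]
          have hiku : i ≠ ku := by
            intro h
            apply absurd hi
            simp [h, hku]
            omega
          -- compute inner sum over j
          have inner : ∀ j : Fin m, (j:ℕ) < u - 1 →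
              (∑ ω : Fin m → Bool,
                (if ω i = true then (1:ℝ) else 0) * (if ω j = true then 1 else 0)
                  * (if ω kt = false then 1 else 0) * (if ω ku = false then 1 else 0))
              = (2:ℝ)^m/16 + (if j = i then (2:ℝ)^m/16 else 0)
                - (if j = kt then (2:ℝ)^m/16 else 0) := by
            intro j hj
            have hjku : j ≠ ku := by intro h; apply absurd hj; simp [h, hku]
            by_cases hjkt : j = kt
            · have hz : ∀ ω : Fin m → Bool,
                  (if ω i = true then (1:ℝ) else 0) * (if ω j = true then 1 else 0)
                    * (if ω kt = false then 1 else 0) * (if ω ku = false then 1 else 0) = 0 := by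
                intro ω
                rw [hjkt]
                cases h : ω kt <;> simp [h]
              rw [Finset.sum_congr rfl fun ω _ => hz ω, Finset.sum_const_zero,
                if_pos hjkt, if_neg (by rw [hjkt]; exact Ne.symm hikt)]
              ring
            · by_cases hji : j = i
              · have hsq : ∀ ω : Fin m → Bool,
                    (if ω i = true then (1:ℝ) else 0) * (if ω j = true then 1 else 0)
                      * (if ω kt = false then 1 else 0) * (if ω ku = false then 1 else 0)
                    = (if ω j = true then (1:ℝ) else 0)
                      * (if ω kt = false then 1 else 0) * (if ω ku = false then 1 else 0) := by
                  intro ω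
                  rw [hji]
                  cases h : ω i <;> simp [h]
                rw [Finset.sum_congr rfl fun ω _ => hsq ω,
                  count3 m j kt ku hjkt hjku hktu true false false,
                  if_pos hji, if_neg hjkt]
                ring
              · rw [count4 m i j kt ku (fun h => hji (h.symm)) hikt hiku hjkt hjku hktu
                  true true false false, if_neg hji, if_neg hjkt]
                ring
          calc (∑ j : Fin m, (if (j:ℕ) < u - 1 then
                (∑ ω : Fin m → Bool,
                  (if ω i = true then (1:ℝ) else 0) * (if ω j = true then 1 else 0)
                    * (if ω kt = false then 1 else 0) * (if ω ku = false then 1 else 0))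
                else 0))
              = ∑ j ∈ univ.filter (fun j : Fin m => (j:ℕ) < u - 1),
                  ((2:ℝ)^m/16 + (if j = i then (2:ℝ)^m/16 else 0)
                    - (if j = kt then (2:ℝ)^m/16 else 0)) := by
                rw [← Finset.sum_filter]
                refine Finset.sum_congr rfl fun j hj => ?_
                rw [Finset.mem_filter] at hj
                exact inner j hj.2
            _ = ((u-1 : ℕ) : ℝ) * (2^m/16) := by
                rw [Finset.sum_sub_distrib, Finset.sum_add_distrib, Finset.sum_const,
                  Finset.sum_ite_eq' _ i, Finset.sum_ite_eq' _ kt,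
                  card_filter_lt m (u-1) (by omega)]
                have hiF : i ∈ univ.filter (fun j : Fin m => (j:ℕ) < u - 1) := by
                  simp; omega
                have hktF : kt ∈ univ.filter (fun j : Fin m => (j:ℕ) < u - 1) := by
                  simp [hkt]; omega
                rw [if_pos hiF, if_pos hktF, nsmul_eq_mul]
                ring
        · simp [hi]
    _ = ((t-1 : ℕ) : ℝ) * ((u-1 : ℕ) : ℝ) * (2^m/16) := by
        rw [← Finset.sum_filter, Finset.sum_const, card_filter_lt m (t-1) (by omega),
          nsmul_eq_mul]
        ring

/-- For `t < u`, `C_t` and `C_u` are uncorrelated. -/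
theorem C_C_uncorrelated (m t u : ℕ) (h1 : 1 ≤ t) (htu : t < u) (h2 : u ≤ m) :
    expec m (fun ω => (C m t ω : ℝ) * (C m u ω : ℝ)) =
      expec m (fun ω => (C m t ω : ℝ)) * expec m (fun ω => (C m u ω : ℝ)) := by
  have hpow : (2:ℝ)^m ≠ 0 := by positivity
  rw [expec, expec, expec, sum_CC_eq m t u h1 htu h2, sum_C_eq m t h1 (by omega),
    sum_C_eq m u (by omega) h2]
  field_simp
  ring
end

section
/- For all n ≥ 10^6, p(n) ≥ 2^{8√n/3}/(2^{5/2}·n^{3/4}). -/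
open Nat Real Finset List

section dlist

/-- difference list: `dlist a [x₁,…,xₘ] b = [x₁-a, x₂-x₁, …, b-xₘ]`. -/
def dlist : ℕ → List ℕ → ℕ → List ℕ
  | a, [], b => [b - a]
  | a, x :: l, b => (x - a) :: dlist x l b

lemma dlist_length : ∀ (l : List ℕ) (a b : ℕ), (dlist a l b).length = l.length + 1
  | [], _, _ => rfl
  | x :: l, a, b => by simp [dlist, dlist_length l x b]

lemma dlist_sum : ∀ (l : List ℕ) (a b : ℕ), (a :: (l ++ [b])).Pairwise (· < ·) →
    (dlist a l b).sum = b - a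
  | [], a, b, h => by simp [dlist]
  | x :: l, a, b, h => by
    have h' : (x :: (l ++ [b])).Pairwise (· < ·) := h.of_cons
    have hax : a < x := (List.pairwise_cons.1 h).1 x (by simp)
    have hxb : x < b := (List.pairwise_cons.1 h').1 b (by simp)
    have := dlist_sum l x b h'
    simp only [dlist, List.sum_cons, this]
    omega

lemma dlist_pos : ∀ (l : List ℕ) (a b : ℕ), (a :: (l ++ [b])).Pairwise (· < ·) →
    ∀ y ∈ dlist a l b, 0 < y
  | [], a, b, h, y, hy => by
    have hab : a < b := (List.pairwise_cons.1 h).1 b (by simp)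
    simp [dlist] at hy; omega
  | x :: l, a, b, h, y, hy => by
    have h' : (x :: (l ++ [b])).Pairwise (· < ·) := h.of_cons
    have hax : a < x := (List.pairwise_cons.1 h).1 x (by simp)
    simp only [dlist, List.mem_cons] at hy
    rcases hy with rfl | hy
    · omega
    · exact dlist_pos l x b h' y hy

lemma dlist_inj : ∀ (l l' : List ℕ) (a b : ℕ), (a :: (l ++ [b])).Pairwise (· < ·) →
    (a :: (l' ++ [b])).Pairwise (· < ·) → dlist a l b = dlist a l' b → l = l'
  | [], [], _, _, _, _, _ => rfl
  | [], x' :: l', a, b, h, h', he => by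
    have := dlist_length l' x' b
    simp [dlist] at he
    simp [he.2] at this
  | x :: l, [], a, b, h, h', he => by
    have := dlist_length l x b
    simp [dlist] at he
    simp [he.2] at this
  | x :: l, x' :: l', a, b, h, h', he => by
    have hax : a < x := (List.pairwise_cons.1 h).1 x (by simp)
    have hax' : a < x' := (List.pairwise_cons.1 h').1 x' (by simp)
    simp only [dlist, List.cons.injEq] at he
    have hxx : x = x' := by omega
    subst hxx
    have := dlist_inj l l' x b h.of_cons h'.of_cons he.2
    rw [this]

end dlist

/-- The partition function: the number of partitions of `n`. -/
def p (n : ℕ) : ℕ := Fintype.card (Nat.Partition n)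

lemma choose_le_factorial_mul_p (n k : ℕ) (hk : 1 ≤ k) (hkn : k ≤ n) :
    (n - 1).choose (k - 1) ≤ k ! * p n := by
  classical
  set s : Finset (Finset ℕ) := Finset.powersetCard (k - 1) (Finset.Ico 1 n) with hs_def
  set M : Finset ℕ → Multiset ℕ := fun A => ↑(dlist 0 (A.sort (· ≤ ·)) n) with hM_def
  have hpw : ∀ A ∈ s, (0 :: (A.sort (· ≤ ·) ++ [n])).Pairwise (· < ·) := by
    intro A hA
    obtain ⟨hsub, hcard⟩ := Finset.mem_powersetCard.1 hA
    have hmem : ∀ x ∈ A.sort (· ≤ ·), 1 ≤ x ∧ x < n := by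
      intro x hx
      exact Finset.mem_Ico.1 (hsub ((Finset.mem_sort (· ≤ ·)).1 hx))
    refine List.pairwise_cons.2 ⟨?_, ?_⟩
    · intro y hy
      rcases List.mem_append.1 hy with hy | hy
      · exact (hmem y hy).1
      · simp at hy; omega
    · rw [List.pairwise_append]
      refine ⟨A.sortedLT_sort.pairwise, List.pairwise_singleton _ _, ?_⟩
      intro x hx y hy
      simp at hy; subst hy
      exact (hmem x hx).2
  have hcards : s.card = (n - 1).choose (k - 1) := by
    rw [hs_def, Finset.card_powersetCard, Nat.card_Ico]
  have h1 : s.card ≤ k ! * (s.image M).card := by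
    apply Finset.card_le_mul_card_image
    intro P hP
    obtain ⟨A₀, hA₀, hMA₀⟩ := Finset.mem_image.1 hP
    have hcardP : Multiset.card P = k := by
      rw [← hMA₀, hM_def]
      simp only [Multiset.coe_card, dlist_length, Finset.length_sort]
      rw [(Finset.mem_powersetCard.1 hA₀).2]
      omega
    have hinj : (s.filter (fun A => M A = P)).card ≤
        (P.toList.permutations).toFinset.card := by
      apply Finset.card_le_card_of_injOn (fun A => dlist 0 (A.sort (· ≤ ·)) n)
      · intro A hA
        rw [Finset.mem_coe, Finset.mem_filter] at hA
        rw [Finset.mem_coe, List.mem_toFinset, List.mem_permutations]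
        refine Multiset.coe_eq_coe.1 ?_
        rw [Multiset.coe_toList]
        exact hA.2
      · intro A hA A' hA' he
        simp only [Finset.coe_filter, Set.mem_setOf_eq] at hA hA'
        have heq := dlist_inj _ _ 0 n (hpw A hA.1) (hpw A' hA'.1) he
        have := congrArg List.toFinset heq
        rwa [Finset.sort_toFinset, Finset.sort_toFinset] at this
    calc (s.filter (fun A => M A = P)).card
        ≤ (P.toList.permutations).toFinset.card := hinj
      _ ≤ P.toList.permutations.length := List.toFinset_card_le _
      _ = (P.toList.length)! := List.length_permutations _
      _ = k ! := by rw [Multiset.length_toList, hcardP]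
  have h2 : (s.image M).card ≤ p n := by
    have hsub2 : s.image M ⊆
        (Finset.univ : Finset (Nat.Partition n)).image Nat.Partition.parts := by
      intro P hP
      obtain ⟨A, hA, rfl⟩ := Finset.mem_image.1 hP
      refine Finset.mem_image.2 ⟨⟨M A, ?_, ?_⟩, Finset.mem_univ _, rfl⟩
      · intro i hi
        exact dlist_pos _ _ _ (hpw A hA) i (by exact_mod_cast hi)
      · have := dlist_sum _ 0 n (hpw A hA)
        rw [hM_def]
        simp only [Multiset.sum_coe]
        omega
    calc (s.image M).card ≤ _ := Finset.card_le_card hsub2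
      _ ≤ (Finset.univ : Finset (Nat.Partition n)).card := Finset.card_image_le
      _ = p n := Finset.card_univ
  calc (n - 1).choose (k - 1) = s.card := hcards.symm
    _ ≤ k ! * (s.image M).card := h1
    _ ≤ k ! * p n := Nat.mul_le_mul_left _ h2


-- Stirling upper bound
lemma factorial_le_stirling (m : ℕ) (hm : 1 ≤ m) :
    (m ! : ℝ) ≤ Real.exp 1 * Real.sqrt m * ((m : ℝ) / Real.exp 1) ^ m := by
  obtain ⟨j, rfl⟩ : ∃ j, m = j + 1 := ⟨m - 1, by omega⟩
  have h := Stirling.stirlingSeq'_antitone (Nat.zero_le j)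
  simp only [Function.comp_apply, Nat.succ_eq_add_one] at h
  norm_num [Stirling.stirlingSeq_one] at h
  have hpos : (0:ℝ) < Real.sqrt (2 * (j+1 : ℕ) : ℝ) * (((j+1 : ℕ) : ℝ) / Real.exp 1) ^ (j+1) := by
    have : (0:ℝ) < ((j+1 : ℕ) : ℝ) := by positivity
    positivity
  have hs : Stirling.stirlingSeq (j + 1) =
      ((j+1)! : ℝ) / (Real.sqrt (2 * (j+1 : ℕ) : ℝ) * (((j+1 : ℕ) : ℝ) / Real.exp 1) ^ (j+1)) := rfl
  rw [hs] at h
  have h2 : ((j+1)! : ℝ) ≤ (Real.exp 1 / Real.sqrt 2) *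
      (Real.sqrt (2 * (j+1 : ℕ) : ℝ) * (((j+1 : ℕ) : ℝ) / Real.exp 1) ^ (j+1)) :=
    (div_le_iff₀ hpos).1 h
  have hsqrt : Real.sqrt (2 * (j+1 : ℕ) : ℝ) = Real.sqrt 2 * Real.sqrt ((j+1 : ℕ) : ℝ) :=
    Real.sqrt_mul (by norm_num) _
  have hs2 : (0:ℝ) < Real.sqrt 2 := by positivity
  calc ((j+1)! : ℝ) ≤ _ := h2
    _ = Real.exp 1 * Real.sqrt ((j+1 : ℕ) : ℝ) * (((j+1 : ℕ) : ℝ) / Real.exp 1) ^ (j+1) := by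
        rw [hsqrt]; field_simp

lemma log_factorial_le (m : ℕ) (hm : 1 ≤ m) :
    Real.log (m !) ≤ 1 + Real.log m / 2 + m * (Real.log m - 1) := by
  have hm0 : (0:ℝ) < (m:ℝ) := by exact_mod_cast hm
  have h1 := factorial_le_stirling m hm
  have hf : (0:ℝ) < (m ! : ℝ) := by exact_mod_cast m.factorial_pos
  have := Real.log_le_log hf h1
  calc Real.log (m !) ≤ Real.log (Real.exp 1 * Real.sqrt m * ((m : ℝ) / Real.exp 1) ^ m) := this
    _ = 1 + Real.log m / 2 + m * (Real.log m - 1) := by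
        rw [Real.log_mul (by positivity) (by positivity),
          Real.log_mul (by positivity) (by positivity), Real.log_exp, Real.log_sqrt hm0.le,
          Real.log_pow, Real.log_div (by positivity) (Real.exp_ne_zero 1), Real.log_exp]

-- purely linear-arithmetic core
lemma core_ineq (S K l1 lS lK lM L2 F1 F2 : ℝ)
    (hS : 1000 ≤ S) (hK : 1000 ≤ K) (hKS : K ≤ S) (hSK : S < K + 1)
    (hL2a : 0.6931 ≤ L2) (hL2b : L2 ≤ 0.6932)
    (hl1 : lS - 1/999 ≤ l1) (hlM : 2 * l1 ≤ lM)
    (hlK : lK ≤ lS)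
    (hlS : lS ≤ S/100 + 7)
    (hF1 : F1 ≤ 1 + lK/2 + K * (lK - 1))
    (hF2 : F2 ≤ 1 + lK/2 + (K - 1) * (lK - 1)) :
    (8 * S / 3) * L2 - ((5:ℝ)/2 * L2 + (3:ℝ)/4 * (2 * lS)) ≤ (K - 1) * lM - (F2 + F1) := by
  have hK1 : (0:ℝ) ≤ K - 1 := by linarith
  have A1 : (K - 1) * (2 * l1) ≤ (K - 1) * lM := mul_le_mul_of_nonneg_left hlM hK1
  have A2 : (K - 1) * (lS - 1/999) ≤ (K - 1) * l1 := mul_le_mul_of_nonneg_left hl1 hK1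
  have A3 : K * lK ≤ K * lS := mul_le_mul_of_nonneg_left hlK (by linarith)
  have A4 : S * L2 ≤ S * 0.6932 := mul_le_mul_of_nonneg_left hL2b (by linarith)
  nlinarith [A1, A2, A3, A4]

set_option maxHeartbeats 1000000 in
/-- For all `n ≥ 10⁶`, `p(n) ≥ 2^{8√n/3}/(2^{5/2}·n^{3/4})`. -/
theorem p_lower_bound_large (n : ℕ) (hn : 10 ^ 6 ≤ n) :
    (2 : ℝ) ^ (8 * Real.sqrt n / 3) / (2 ^ ((5 : ℝ) / 2) * (n : ℝ) ^ ((3 : ℝ) / 4)) ≤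
      (p n : ℝ) := by
  have hn1 : 1 ≤ n := le_trans (by norm_num) hn
  set k := Nat.sqrt n with hk_def
  have hk1000 : 1000 ≤ k := Nat.le_sqrt.2 (by omega)
  have hkn : k ≤ n := Nat.sqrt_le_self n
  have hk1 : 1 ≤ k := by omega
  set m := n - (k - 1) with hm_def
  have hm1 : 1 ≤ m := by omega
  -- real quantities
  set N : ℝ := (n : ℝ) with hN_def
  set S : ℝ := Real.sqrt N with hS_def
  set K : ℝ := (k : ℝ) with hK_def
  have hN0 : (0:ℝ) < N := by positivity
  have hS2 : S * S = N := Real.mul_self_sqrt hN0.le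
  have hKK : K * K ≤ N := by
    rw [hK_def, hN_def, hk_def]; exact_mod_cast Nat.sqrt_le n
  have hKK2 : N < (K + 1) * (K + 1) := by
    rw [hK_def, hN_def, hk_def]; exact_mod_cast Nat.lt_succ_sqrt n
  have hK1000 : (1000:ℝ) ≤ K := by rw [hK_def]; exact_mod_cast hk1000
  have hS0 : 0 ≤ S := Real.sqrt_nonneg N
  have hKS : K ≤ S := by nlinarith
  have hSK : S < K + 1 := by nlinarith
  have hS1000 : (1000:ℝ) ≤ S := le_trans hK1000 hKS
  have hmR : (m : ℝ) = N - K + 1 := by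
    rw [hm_def]
    push_cast [Nat.cast_sub (by omega : k - 1 ≤ n), Nat.cast_sub hk1]
    ring
  have hm0 : (0:ℝ) < (m:ℝ) := by exact_mod_cast hm1
  -- counting chain
  have hcount : ((n - 1).choose (k - 1) : ℝ) ≤ (k ! : ℝ) * (p n : ℝ) := by
    exact_mod_cast choose_le_factorial_mul_p n k hk1 hkn
  have hchoose : ((m : ℝ) ^ (k - 1)) / ((k-1)! : ℝ) ≤ ((n - 1).choose (k - 1) : ℝ) := by
    have h := Nat.pow_le_choose (k - 1) (n - 1) (α := ℝ)
    have he : n - 1 + 1 - (k - 1) = m := by omega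
    rwa [he] at h
  have hfacpos : (0:ℝ) < ((k-1)! : ℝ) := by exact_mod_cast (k-1).factorial_pos
  have hfacpos2 : (0:ℝ) < (k ! : ℝ) := by exact_mod_cast k.factorial_pos
  have hRp : ((m : ℝ) ^ (k - 1)) / (((k-1)! : ℝ) * (k ! : ℝ)) ≤ (p n : ℝ) := by
    rw [div_le_iff₀ (by positivity)]
    have h1 : ((m : ℝ) ^ (k - 1)) ≤ ((n - 1).choose (k - 1) : ℝ) * ((k-1)! : ℝ) := by
      rw [← div_le_iff₀ hfacpos] at *
      exact hchoose
    calc ((m : ℝ) ^ (k - 1)) ≤ ((n - 1).choose (k - 1) : ℝ) * ((k-1)! : ℝ) := h1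
      _ ≤ ((k ! : ℝ) * (p n : ℝ)) * ((k-1)! : ℝ) := by
          apply mul_le_mul_of_nonneg_right hcount hfacpos.le
      _ = (p n : ℝ) * (((k-1)! : ℝ) * (k ! : ℝ)) := by ring
  refine le_trans ?_ hRp
  -- now the analytic inequality, via logs
  have hT0 : (0:ℝ) < (2 : ℝ) ^ (8 * S / 3) / (2 ^ ((5 : ℝ) / 2) * N ^ ((3 : ℝ) / 4)) := by
    positivity
  have hR0 : (0:ℝ) < ((m : ℝ) ^ (k - 1)) / (((k-1)! : ℝ) * (k ! : ℝ)) := by positivity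
  rw [← Real.log_le_log_iff hT0 hR0]
  -- compute both logs
  have hlogN : Real.log N = 2 * Real.log S := by
    rw [← hS2, Real.log_mul (by nlinarith) (by nlinarith)]; ring
  have hlogT : Real.log ((2 : ℝ) ^ (8 * S / 3) / (2 ^ ((5 : ℝ) / 2) * N ^ ((3 : ℝ) / 4)))
      = (8 * S / 3) * Real.log 2 - ((5:ℝ)/2 * Real.log 2 + (3:ℝ)/4 * (2 * Real.log S)) := by
    rw [Real.log_div (by positivity) (by positivity),
      Real.log_mul (by positivity) (by positivity),
      Real.log_rpow (by norm_num), Real.log_rpow (by norm_num), Real.log_rpow hN0, hlogN]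
  have hlogR : Real.log (((m : ℝ) ^ (k - 1)) / (((k-1)! : ℝ) * (k ! : ℝ)))
      = (K - 1) * Real.log m - (Real.log ((k-1)! : ℝ) + Real.log (k ! : ℝ)) := by
    rw [Real.log_div (by positivity) (by positivity),
      Real.log_mul (by positivity) (by positivity), Real.log_pow]
    congr 2
    push_cast [Nat.cast_sub hk1]
    ring
  rw [hlogT, hlogR]
  -- log facts
  have hS1 : (0:ℝ) < S - 1 := by linarith
  have hl1 : Real.log S - 1/999 ≤ Real.log (S - 1) := by
    have h1 : Real.log (S / (S - 1)) ≤ S / (S - 1) - 1 := Real.log_le_sub_one_of_pos (by positivity)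
    have h2 : S / (S - 1) - 1 = 1 / (S - 1) := by field_simp; ring
    have h3 : Real.log (S / (S - 1)) = Real.log S - Real.log (S - 1) := Real.log_div (by linarith) (by linarith)
    have h4 : 1 / (S - 1) ≤ 1/999 := by
      rw [div_le_div_iff₀ (by linarith) (by norm_num)]; linarith
    linarith
  have hlM : 2 * Real.log (S - 1) ≤ Real.log m := by
    have h1 : (S - 1) * (S - 1) ≤ (m : ℝ) := by rw [hmR]; nlinarith [hS2, hKS, hS1000]
    calc 2 * Real.log (S - 1) = Real.log ((S-1) * (S-1)) := by
          rw [Real.log_mul (by linarith) (by linarith)]; ring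
      _ ≤ Real.log m := Real.log_le_log (by positivity) h1
  have hlK : Real.log K ≤ Real.log S := Real.log_le_log (by linarith) hKS
  have hlS : Real.log S ≤ S / 100 + 7 := by
    have h1 : Real.log (S / 100) ≤ S / 100 - 1 := Real.log_le_sub_one_of_pos (by positivity)
    have h2 : Real.log (S / 100) = Real.log S - Real.log 100 := Real.log_div (by linarith) (by norm_num)
    have h3 : Real.log 100 ≤ 8 * Real.log 2 := by
      calc Real.log 100 ≤ Real.log 256 := Real.log_le_log (by norm_num) (by norm_num)
        _ = 8 * Real.log 2 := by
            rw [show (256:ℝ) = 2 ^ (8:ℕ) by norm_num, Real.log_pow]; norm_num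
    have h4 : Real.log 2 ≤ 0.6932 := le_of_lt (lt_trans Real.log_two_lt_d9 (by norm_num))
    linarith
  have hF1 : Real.log (k ! : ℝ) ≤ 1 + Real.log K / 2 + K * (Real.log K - 1) := by
    exact_mod_cast log_factorial_le k hk1
  have hF2 : Real.log ((k-1)! : ℝ) ≤ 1 + Real.log K / 2 + (K - 1) * (Real.log K - 1) := by
    have h1 := log_factorial_le (k-1) (by omega)
    have hc : ((k - 1 : ℕ) : ℝ) = K - 1 := by push_cast [Nat.cast_sub hk1]; ring
    rw [hc] at h1
    have hK1' : (1:ℝ) ≤ K - 1 := by linarith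
    have hlt : Real.log (K - 1) ≤ Real.log K := Real.log_le_log (by linarith) (by linarith)
    have hge : (1:ℝ) ≤ Real.log (K - 1) := by
      have : Real.exp 1 ≤ K - 1 := by
        have := Real.exp_one_lt_d9
        nlinarith
      calc (1:ℝ) = Real.log (Real.exp 1) := (Real.log_exp 1).symm
        _ ≤ Real.log (K - 1) := Real.log_le_log (Real.exp_pos 1) this
    have : (K - 1) * (Real.log (K-1) - 1) ≤ (K - 1) * (Real.log K - 1) := by
      apply mul_le_mul_of_nonneg_left (by linarith) (by linarith)
    linarith
  exact core_ineq S K (Real.log (S-1)) (Real.log S) (Real.log K) (Real.log m) (Real.log 2)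
    (Real.log (k ! : ℝ)) (Real.log ((k-1)! : ℝ))
    hS1000 hK1000 hKS hSK
    (le_of_lt (lt_of_lt_of_le (by norm_num) (le_of_lt Real.log_two_gt_d9)))
    (le_of_lt (lt_trans Real.log_two_lt_d9 (by norm_num)))
    hl1 hlM hlK hlS hF1 hF2
end
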